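/- Let Z be a real Banach space and X ⊆ Z* a norm-closed subspace which is norming for Z. Suppose that the closed unit ball B_{X*} of X* equipped with the weak* topology is convex block compact. Then every absolutely convex σ(Z,X)-compact set K ⊆ Z is relatively convex block compact in (Z,σ(Z,X)): every sequence in K admits a convex block subsequence that σ(Z,X)-converges to a point of K. -/

import Mathlib

open MeasureTheory Filter Set Topology
open scoped UniformConvergence

noncomputable section

/-- The topology `σ(Z,X)` on `Z` of pointwise convergence on a subspace `X ⊆ Z*`. -/
def sigmaTop {Z : Type*} [NormedAddCommGroup Z] [NormedSpace ℝ Z]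
    (X : Submodule ℝ (Z →L[ℝ] ℝ)) : TopologicalSpace Z :=
  TopologicalSpace.induced (fun z => fun x : X => (x : Z →L[ℝ] ℝ) z) Pi.topologicalSpace

/-- The weak* topology on the dual of `E`: pointwise convergence on `E`. -/
def wstarTop (E : Type*) [NormedAddCommGroup E] [NormedSpace ℝ E] :
    TopologicalSpace (E →L[ℝ] ℝ) :=
  TopologicalSpace.induced (fun f => (f : E → ℝ)) Pi.topologicalSpace

/-- A norm-closed subspace `X ⊆ Z*` is norming for `Z` if
`|||z||| = sup {⟨x,z⟩ : x ∈ B_X}` is an equivalent norm on `Z`; since this sup is always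
`≤ ‖z‖`, this amounts to the existence of `c > 0` with `c⬝‖z‖ ≤ |||z|||` for all `z`. -/
def IsNorming {Z : Type*} [NormedAddCommGroup Z] [NormedSpace ℝ Z]
    (X : Submodule ℝ (Z →L[ℝ] ℝ)) : Prop :=
  ∃ c > (0 : ℝ), ∀ z : Z, c * ‖z‖ ≤ sSup {r : ℝ | ∃ x ∈ X, ‖x‖ ≤ 1 ∧ r = x z}

/-- The average range `𝒜_ν(A) = {ν(B)/μ(B) : B ∈ Σ, B ⊆ A, μ(B) > 0}`. -/
def avgRange {Ω : Type*} [MeasurableSpace Ω] {Z : Type*} [NormedAddCommGroup Z]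
    [NormedSpace ℝ Z] (μ : Measure Ω) (ν : VectorMeasure Ω (Z →L[ℝ] ℝ)) (A : Set Ω) :
    Set (Z →L[ℝ] ℝ) :=
  {w | ∃ B : Set Ω, MeasurableSet B ∧ B ⊆ A ∧ 0 < μ B ∧ w = (μ B).toReal⁻¹ • ν B}

/-- Condition (G): for every `A ∈ Σ` with `μ(A) > 0`, the `w*`-closed convex hull of the
average range `𝒜_ν(A)` intersects `X`. -/
def CondG {Ω : Type*} [MeasurableSpace Ω] {Z : Type*} [NormedAddCommGroup Z]
    [NormedSpace ℝ Z] (μ : Measure Ω) (ν : VectorMeasure Ω (Z →L[ℝ] ℝ))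
    (X : Submodule ℝ (Z →L[ℝ] ℝ)) : Prop :=
  ∀ A : Set Ω, MeasurableSet A → 0 < μ A →
    (@closure _ (wstarTop Z) (convexHull ℝ (avgRange μ ν A)) ∩
      (X : Set (Z →L[ℝ] ℝ))).Nonempty

/-- `h` is a convex block subsequence of `g`: `h k = ∑_{n ∈ I k} a n • g n` where the finite
sets `I k` satisfy `max (I k) < min (I (k+1))` and the `a n` are non-negative reals summing
to `1` over each `I k`. -/
def ConvexBlock {E : Type*} [AddCommMonoid E] [Module ℝ E] (g h : ℕ → E) : Prop :=
  ∃ (I : ℕ → Finset ℕ) (a : ℕ → ℝ),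
    (∀ k, ∀ n ∈ I k, ∀ m ∈ I (k + 1), n < m) ∧
    (∀ n, 0 ≤ a n) ∧ (∀ k, ∑ n ∈ I k, a n = 1) ∧
    (∀ k, h k = ∑ n ∈ I k, a n • g n)

/-- `(B_{X*}, w*)` is convex block compact: every sequence in the closed unit ball of `X*`
admits a convex block subsequence which is `w*`-convergent. -/
def DualBallConvexBlockCompact (X : Type*) [NormedAddCommGroup X] [NormedSpace ℝ X] : Prop :=
  ∀ g : ℕ → (X →L[ℝ] ℝ), (∀ n, ‖g n‖ ≤ 1) →
    ∃ h : ℕ → (X →L[ℝ] ℝ), ConvexBlock g h ∧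
      ∃ f : X →L[ℝ] ℝ, Tendsto h atTop (@nhds _ (wstarTop X) f)

abbrev DualOf (E : Type*) [NormedAddCommGroup E] [NormedSpace ℝ E] := E →L[ℝ] ℝ

/-- If `(B_{X*}, w*)` is convex block compact, then every absolutely convex
`σ(Z,X)`-compact set `K ⊆ Z` is relatively convex block compact in `(Z, σ(Z,X))`:
every sequence in `K` admits a convex block subsequence `σ(Z,X)`-converging to a
point of `K`. -/
theorem absConvex_compact_relativelyConvexBlockCompact
    {Z : Type*} [NormedAddCommGroup Z] [NormedSpace ℝ Z] [CompleteSpace Z]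
    (X : Submodule ℝ (Z →L[ℝ] ℝ)) (hXclosed : IsClosed (X : Set (Z →L[ℝ] ℝ)))
    (hXnorming : IsNorming X)
    (hCBC : DualBallConvexBlockCompact ↥X)
    (K : Set Z) (hKconv : Convex ℝ K) (hKbal : Balanced ℝ K)
    (hKcomp : @IsCompact Z (sigmaTop X) K) :
    ∀ z : ℕ → Z, (∀ n, z n ∈ K) →
      ∃ w : ℕ → Z, ConvexBlock z w ∧
        ∃ w₀ ∈ K, Tendsto w atTop (@nhds _ (sigmaTop X) w₀) := by
  intro z hz
  -- the evaluation map `J : Z → X*`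
  set J : Z → DualOf ↥X := fun v => (ContinuousLinearMap.apply ℝ ℝ v).comp X.subtypeL
    with hJdef
  have hJapp : ∀ (v : Z) (x : ↥X), J v x = (x : Z →L[ℝ] ℝ) v := fun v x => rfl
  -- the map into the product space
  set φ : Z → (↥X → ℝ) := fun v => fun x : ↥X => (x : Z →L[ℝ] ℝ) v with hφdef
  have hφcont : @Continuous Z (↥X → ℝ) (sigmaTop X) _ φ :=
    @continuous_induced_dom _ _ φ _
  have hScomp : IsCompact (φ '' K) :=
    @IsCompact.image Z (↥X → ℝ) (sigmaTop X) _ K φ hKcomp hφcont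
  -- pointwise boundedness on K
  have hbdd : ∀ x : ↥X, ∃ C : ℝ, ∀ v ∈ K, ‖(x : Z →L[ℝ] ℝ) v‖ ≤ C := by
    intro x
    have hcomp : IsCompact ((fun g : ↥X → ℝ => g x) '' (φ '' K)) :=
      hScomp.image (continuous_apply x)
    obtain ⟨C, hC⟩ := hcomp.isBounded.exists_norm_le
    exact ⟨C, fun v hv => hC _ ⟨φ v, ⟨v, hv, rfl⟩, rfl⟩⟩
  -- Banach–Steinhaus gives a uniform bound
  haveI : CompleteSpace ↥X := hXclosed.completeSpace_coe
  obtain ⟨M0, hM0⟩ := banach_steinhaus (𝕜 := ℝ) (𝕜₂ := ℝ)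
    (g := fun p : K => J (p : Z)) (fun x => by
      obtain ⟨C, hC⟩ := hbdd x
      exact ⟨C, fun p => hC p p.2⟩)
  set M : ℝ := max M0 1 with hMdef
  have hM1 : (1 : ℝ) ≤ M := le_max_right _ _
  have hMpos : (0 : ℝ) < M := lt_of_lt_of_le one_pos hM1
  -- normalized sequence in the ball of X*
  set g : ℕ → DualOf ↥X := fun n => M⁻¹ • J (z n) with hgdef
  have hgball : ∀ n, ‖g n‖ ≤ 1 := by
    intro n
    have h1 : ‖J (z n)‖ ≤ M0 := hM0 ⟨z n, hz n⟩
    refine ContinuousLinearMap.opNorm_le_bound _ zero_le_one (fun x => ?_)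
    have h2 : ‖J (z n) x‖ ≤ M * ‖x‖ := le_trans (ContinuousLinearMap.le_opNorm _ _)
      (mul_le_mul_of_nonneg_right (h1.trans (le_max_left _ _)) (norm_nonneg x))
    have h3 : g n x = M⁻¹ * (J (z n) x) := rfl
    rw [h3, one_mul, Real.norm_eq_abs, abs_mul, abs_of_pos (inv_pos.mpr hMpos)]
    calc M⁻¹ * |(J (z n)) x| ≤ M⁻¹ * (M * ‖x‖) := by
          apply mul_le_mul_of_nonneg_left _ (le_of_lt (inv_pos.mpr hMpos))
          simpa [Real.norm_eq_abs] using h2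
      _ = ‖x‖ := by
          rw [← mul_assoc, inv_mul_cancel₀ (ne_of_gt hMpos), one_mul]
  obtain ⟨h, ⟨I, a, hIlt, ha0, hasum, hheq⟩, f, hf⟩ := hCBC g hgball
  -- the corresponding convex blocks in Z
  set w : ℕ → Z := fun k => ∑ n ∈ I k, a n • z n with hwdef
  have hwK : ∀ k, w k ∈ K :=
    fun k => hKconv.sum_mem (fun n _ => ha0 n) (hasum k) (fun n _ => hz n)
  -- pointwise convergence of h to f
  have h1 : ∀ x : ↥X, Tendsto (fun k => h k x) atTop (𝓝 (f x)) := by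
    have hf' := hf
    rw [show wstarTop ↥X = TopologicalSpace.induced
        (fun q : DualOf ↥X => (q : ↥X → ℝ)) Pi.topologicalSpace from rfl,
      nhds_induced, Filter.tendsto_comap_iff] at hf'
    intro x
    exact (tendsto_pi_nhds.mp hf') x
  -- key identity
  have key : ∀ (k : ℕ) (x : ↥X), (x : Z →L[ℝ] ℝ) (w k) = M * h k x := by
    intro k x
    have hL : (x : Z →L[ℝ] ℝ) (w k) = ∑ n ∈ I k, a n * (x : Z →L[ℝ] ℝ) (z n) := by
      rw [hwdef]
      simp [map_sum, ContinuousLinearMap.map_smul, smul_eq_mul]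
    have hR : h k x = ∑ n ∈ I k, a n * (M⁻¹ * (x : Z →L[ℝ] ℝ) (z n)) := by
      rw [hheq k]
      simp [hgdef, hJapp, smul_eq_mul]
    rw [hL, hR, Finset.mul_sum]
    refine Finset.sum_congr rfl (fun n _ => ?_)
    field_simp
  -- the limit candidate in the product space
  set g₀ : ↥X → ℝ := fun x => M * f x with hg₀def
  have hφw : Tendsto (fun k => φ (w k)) atTop (𝓝 g₀) := by
    rw [tendsto_pi_nhds]
    intro x
    have := (h1 x).const_mul M
    simpa [hφdef, key, hg₀def] using this
  have hg₀mem : g₀ ∈ φ '' K := by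
    have hclosed : IsClosed (φ '' K) := hScomp.isClosed
    exact hclosed.mem_of_tendsto hφw (Filter.Eventually.of_forall fun k => ⟨w k, hwK k, rfl⟩)
  obtain ⟨w₀, hw₀K, hφw₀⟩ := hg₀mem
  refine ⟨w, ⟨I, a, hIlt, ha0, hasum, fun k => rfl⟩, w₀, hw₀K, ?_⟩
  rw [show sigmaTop X = TopologicalSpace.induced φ Pi.topologicalSpace from rfl,
    nhds_induced, Filter.tendsto_comap_iff]
  rw [hφw₀]
  exact hφw
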